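/- Let L : ℝ^n × (ℝ^m →ₗ[ℝ] ℝ^n) → ℝ be smooth and satisfy the infinitesimal homogeneity condition Σ_{a=1}^n u_i^a (∂L/∂u_j^a)(x,u) = δ_i^j L(x,u) for all i, j and all (x,u), where u_i^a is the a-th component of u(e_i). Then for all (x,u): Σ_{a₁,…,a_m = 1}^n (∂^m L / ∂u_1^{a₁} ∂u_2^{a₂} ⋯ ∂u_m^{a_m})(x, u) · det( (u_j^{a_i})_{1 ≤ i,j ≤ m} ) = m! · L(x, u), where the determinant is of the m×m matrix whose (i,j) entry is u_j^{a_i} and the mixed partial derivative is taken in the fibre coordinates u_1^{a₁}, …, u_m^{a_m}. -/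

import Mathlib

/-- The basis element of the fibre of `T_mℝ^n` corresponding to the fibre
coordinate `u_j^a`: the linear map `ℝ^m → ℝ^n` sending `v ↦ v_j • e_a`. -/
noncomputable def fibreDir (m n : ℕ) (j : Fin m) (a : Fin n) :
    (Fin m → ℝ) →L[ℝ] (Fin n → ℝ) :=
  (ContinuousLinearMap.proj j : (Fin m → ℝ) →L[ℝ] ℝ).smulRight (Pi.single a 1)

namespace FEI

/-- Matrix unit `E_{i j}` as an endomorphism of `ℝ^m` : `v ↦ v_j • e_i`. -/
noncomputable def eu (m : ℕ) (i j : Fin m) : (Fin m → ℝ) →L[ℝ] (Fin m → ℝ) :=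
  fibreDir m m j i

theorem fibreDir_apply (m n : ℕ) (j : Fin m) (a : Fin n) (v : Fin m → ℝ) :
    fibreDir m n j a v = v j • (Pi.single a 1 : Fin n → ℝ) := rfl

theorem eu_apply (m : ℕ) (i j : Fin m) (v : Fin m → ℝ) :
    eu m i j v = v j • (Pi.single i 1 : Fin m → ℝ) := rfl

/-- The trace of an endomorphism of `ℝ^m`. -/
def tr (m : ℕ) (B : (Fin m → ℝ) →L[ℝ] (Fin m → ℝ)) : ℝ := ∑ i, B (Pi.single i 1) i

theorem tr_eu (m : ℕ) (i j : Fin m) : tr m (eu m i j) = if i = j then (1:ℝ) else 0 := by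
  classical
  simp only [tr, eu_apply, Pi.smul_apply, smul_eq_mul, Pi.single_apply]
  rw [Finset.sum_congr rfl (fun b _ => by
    rw [show ((if j = b then (1:ℝ) else 0) * if b = i then (1:ℝ) else 0)
      = if b = j then (if b = i then (1:ℝ) else 0) else 0 by
        rcases eq_or_ne b j with rfl | hb
        · simp
        · simp [hb, Ne.symm hb]])]
  rw [Finset.sum_ite_eq' Finset.univ j (fun b => if b = i then (1:ℝ) else 0)]
  simp [eq_comm]

theorem tr_zero (m : ℕ) : tr m 0 = 0 := by simp [tr]

theorem eu_comp_eu (m : ℕ) (a b a' b' : Fin m) :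
    (eu m a b).comp (eu m a' b') = if b = a' then eu m a b' else 0 := by
  ext v i
  simp only [ContinuousLinearMap.comp_apply, eu_apply, Pi.smul_apply, smul_eq_mul]
  rcases eq_or_ne b a' with rfl | hb
  · simp [Pi.single_apply, eu_apply]
  · simp [Pi.single_apply, Ne.symm hb, hb]

/-- The universal coefficients: iterated "Euler" coefficients defined by the
recursion coming from differentiating the homogeneity identity. -/
noncomputable def cc (m : ℕ) : (k : ℕ) → (Fin k → ((Fin m → ℝ) →L[ℝ] (Fin m → ℝ))) → ℝ
  | 0, _ => 1
  | (k+1), A => tr m (A 0) * cc m k (Fin.tail A)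
      - ∑ t : Fin k, cc m k (Function.update (Fin.tail A) t ((A 0).comp (Fin.tail A t)))

theorem cc_zero_slot (m : ℕ) : ∀ (k : ℕ) (A : Fin k → ((Fin m → ℝ) →L[ℝ] (Fin m → ℝ)))
    (t : Fin k), A t = 0 → cc m k A = 0 := by
  intro k
  induction k with
  | zero => exact fun _ t => t.elim0
  | succ k IH =>
    intro A t ht
    induction t using Fin.cases with
    | zero =>
      rw [cc, ht, tr_zero, zero_mul, zero_sub, neg_eq_zero]
      apply Finset.sum_eq_zero
      intro s _
      apply IH _ s
      simp [ht]
    | succ s =>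
      have hs : Fin.tail A s = 0 := ht
      rw [cc]
      have h1 : cc m k (Fin.tail A) = 0 := IH _ s hs
      rw [h1, mul_zero, zero_sub, neg_eq_zero]
      apply Finset.sum_eq_zero
      intro t' _
      apply IH _ s
      rcases eq_or_ne t' s with rfl | hts
      · simp [hs]
      · rw [Function.update_apply, if_neg (Ne.symm hts), hs]


theorem det_swap_cofactor {k : ℕ} (M : Matrix (Fin (k+1)) (Fin (k+1)) ℝ) :
    M.det = ∑ r : Fin (k+1), (if r = 0 then (1:ℝ) else -1) * M r 0 *
      (M.submatrix (fun s : Fin k => Equiv.swap 0 r s.succ) Fin.succ).det := by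
  rw [Matrix.det_apply']
  rw [← Equiv.sum_comp Equiv.Perm.decomposeFin.symm
    (fun σ => ((Equiv.Perm.sign σ : ℤ) : ℝ) * ∏ i, M (σ i) i)]
  rw [Fintype.sum_prod_type]
  refine Finset.sum_congr rfl fun r _ => ?_
  rw [Matrix.det_apply', Finset.mul_sum]
  refine Finset.sum_congr rfl fun π _ => ?_
  rw [Equiv.Perm.decomposeFin.symm_sign, Fin.prod_univ_succ,
    Equiv.Perm.decomposeFin_symm_apply_zero]
  simp only [Equiv.Perm.decomposeFin_symm_apply_succ, Matrix.submatrix_apply]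
  rcases eq_or_ne r 0 with rfl | hr
  · simp only [if_pos rfl]
    push_cast
    ring
  · simp only [if_neg hr]
    push_cast
    ring

theorem comb (m : ℕ) : ∀ (k : ℕ) (p q : Fin k → Fin m),
    ∑ σ : Equiv.Perm (Fin k), ((Equiv.Perm.sign σ : ℤ) : ℝ) *
      cc m k (fun t => eu m (p (σ t)) (q t)) =
    (k.factorial : ℝ) *
      (Matrix.of fun s t : Fin k => if p s = q t then (1:ℝ) else 0).det := by
  intro k
  induction k with
  | zero =>
    intro p q
    simp [cc, Matrix.det_fin_zero]
  | succ k IH =>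
    intro p q
    set T : ℝ := ∑ σ : Equiv.Perm (Fin (k+1)), ((Equiv.Perm.sign σ : ℤ) : ℝ) *
      ((if p (σ 0) = q 0 then (1:ℝ) else 0) *
        cc m k (fun t => eu m (p (σ t.succ)) (q t.succ))) with hT
    have expand : ∀ σ : Equiv.Perm (Fin (k+1)),
        cc m (k+1) (fun t => eu m (p (σ t)) (q t))
        = (if p (σ 0) = q 0 then (1:ℝ) else 0) *
            cc m k (fun t => eu m (p (σ t.succ)) (q t.succ))
          - ∑ t : Fin k, (if q 0 = p (σ t.succ) then (1:ℝ) else 0) *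
            cc m k (fun s => eu m (p ((σ * Equiv.swap 0 t.succ) s.succ)) (q s.succ)) := by
      intro σ
      rw [cc]
      simp only [Fin.tail_def]
      congr 1
      · rw [tr_eu]
      · refine Finset.sum_congr rfl fun t _ => ?_
        rw [eu_comp_eu]
        rcases eq_or_ne (q 0) (p (σ t.succ)) with hq | hq
        · rw [if_pos hq, if_pos hq, one_mul]
          congr 1
          funext s
          rcases eq_or_ne s t with rfl | hst
          · rw [Function.update_self]
            have h2 : (σ * Equiv.swap 0 s.succ) s.succ = σ 0 := by
              simp [Equiv.Perm.mul_apply, Equiv.swap_apply_right]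
            rw [h2]
          · rw [Function.update_of_ne hst]
            have h1 : s.succ ≠ 0 := Fin.succ_ne_zero s
            have h2 : s.succ ≠ t.succ := fun h => hst (Fin.succ_injective _ h)
            have h3 : (σ * Equiv.swap 0 t.succ) s.succ = σ s.succ := by
              simp [Equiv.Perm.mul_apply, Equiv.swap_apply_of_ne_of_ne h1 h2]
            rw [h3]
        · rw [if_neg hq, if_neg hq, zero_mul]
          exact cc_zero_slot m k _ t (Function.update_self _ _ _)
    have hswap : ∀ t : Fin k, ∑ σ : Equiv.Perm (Fin (k+1)),
        ((Equiv.Perm.sign σ : ℤ) : ℝ) *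
        ((if q 0 = p (σ t.succ) then (1:ℝ) else 0) *
          cc m k (fun s => eu m (p ((σ * Equiv.swap 0 t.succ) s.succ)) (q s.succ))) = -T := by
      intro t
      have h0t : (0 : Fin (k+1)) ≠ t.succ := (Fin.succ_ne_zero t).symm
      rw [← Equiv.sum_comp (Equiv.mulRight (Equiv.swap (0 : Fin (k+1)) t.succ))
        (fun σ => ((Equiv.Perm.sign σ : ℤ) : ℝ) *
          ((if q 0 = p (σ t.succ) then (1:ℝ) else 0) *
            cc m k (fun s => eu m (p ((σ * Equiv.swap 0 t.succ) s.succ)) (q s.succ))))]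
      rw [hT, ← Finset.sum_neg_distrib]
      refine Finset.sum_congr rfl fun τ _ => ?_
      have e1 : ∀ s : Fin k,
          ((Equiv.mulRight (Equiv.swap (0 : Fin (k+1)) t.succ) τ) * Equiv.swap 0 t.succ) s.succ
            = τ s.succ := by
        intro s
        simp [Equiv.coe_mulRight, mul_assoc, Equiv.swap_mul_self]
      have e2 : (Equiv.mulRight (Equiv.swap (0 : Fin (k+1)) t.succ) τ) t.succ = τ 0 := by
        simp [Equiv.coe_mulRight, Equiv.Perm.mul_apply, Equiv.swap_apply_right]
      have e3 : Equiv.Perm.sign (Equiv.mulRight (Equiv.swap (0 : Fin (k+1)) t.succ) τ)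
          = - Equiv.Perm.sign τ := by
        simp [Equiv.coe_mulRight, Equiv.Perm.sign_mul, Equiv.Perm.sign_swap h0t]
      simp only [e2, e3]
      have e4 : (fun s : Fin k => eu m
          (p (((Equiv.mulRight (Equiv.swap (0 : Fin (k+1)) t.succ) τ) * Equiv.swap 0 t.succ) s.succ))
          (q s.succ)) = fun s : Fin k => eu m (p (τ s.succ)) (q s.succ) := by
        funext s; rw [e1]
      rw [e4]
      have e5 : (if q 0 = p (τ 0) then (1:ℝ) else 0) = (if p (τ 0) = q 0 then (1:ℝ) else 0) := by
        rcases eq_or_ne (q 0) (p (τ 0)) with h | h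
        · rw [if_pos h, if_pos h.symm]
        · rw [if_neg h, if_neg (Ne.symm h)]
      rw [e5]
      push_cast [Units.val_neg]
      ring
    have step1 : ∑ σ : Equiv.Perm (Fin (k+1)), ((Equiv.Perm.sign σ : ℤ) : ℝ) *
        cc m (k+1) (fun t => eu m (p (σ t)) (q t)) = (1 + (k:ℝ)) * T := by
      rw [Finset.sum_congr rfl (fun σ _ => by rw [expand σ, mul_sub, Finset.mul_sum])]
      rw [Finset.sum_sub_distrib, Finset.sum_comm]
      rw [Finset.sum_congr rfl (fun t (_ : t ∈ Finset.univ) => hswap t)]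
      simp only [Finset.sum_const, Finset.card_univ, Fintype.card_fin, nsmul_eq_mul]
      ring
    have step3 : T = (k.factorial : ℝ) *
        (Matrix.of fun s t : Fin (k+1) => if p s = q t then (1:ℝ) else 0).det := by
      rw [hT, ← Equiv.sum_comp Equiv.Perm.decomposeFin.symm
        (fun σ => ((Equiv.Perm.sign σ : ℤ) : ℝ) *
          ((if p (σ 0) = q 0 then (1:ℝ) else 0) *
            cc m k (fun t => eu m (p (σ t.succ)) (q t.succ))))]
      rw [Fintype.sum_prod_type]
      rw [det_swap_cofactor, Finset.mul_sum]
      refine Finset.sum_congr rfl fun r _ => ?_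
      have lhs_eq : ∀ π : Equiv.Perm (Fin k),
          ((Equiv.Perm.sign (Equiv.Perm.decomposeFin.symm (r, π)) : ℤ) : ℝ) *
          ((if p (Equiv.Perm.decomposeFin.symm (r, π) 0) = q 0 then (1:ℝ) else 0) *
            cc m k (fun t => eu m (p (Equiv.Perm.decomposeFin.symm (r, π) t.succ)) (q t.succ)))
          = ((if r = 0 then (1:ℝ) else -1) * (if p r = q 0 then (1:ℝ) else 0)) *
            (((Equiv.Perm.sign π : ℤ) : ℝ) *
              cc m k (fun t => eu m (p (Equiv.swap 0 r (π t).succ)) (q t.succ))) := by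
        intro π
        rw [Equiv.Perm.decomposeFin.symm_sign, Equiv.Perm.decomposeFin_symm_apply_zero]
        have e6 : (fun t : Fin k => eu m (p (Equiv.Perm.decomposeFin.symm (r, π) t.succ))
            (q t.succ)) = fun t : Fin k => eu m (p (Equiv.swap 0 r (π t).succ)) (q t.succ) := by
          funext t; rw [Equiv.Perm.decomposeFin_symm_apply_succ]
        rw [e6]
        rcases eq_or_ne r 0 with rfl | hr
        · simp only [if_pos rfl]; push_cast; ring
        · simp only [if_neg hr]; push_cast; ring
      rw [Finset.sum_congr rfl (fun π _ => lhs_eq π)]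
      rw [← Finset.mul_sum]
      have hsub : (Matrix.of fun s t : Fin (k+1) => if p s = q t then (1:ℝ) else 0).submatrix
          (fun s : Fin k => Equiv.swap 0 r s.succ) Fin.succ
          = Matrix.of fun s t : Fin k =>
              if p (Equiv.swap 0 r s.succ) = q t.succ then (1:ℝ) else 0 := rfl
      have hM : (Matrix.of fun s t : Fin (k+1) => if p s = q t then (1:ℝ) else 0) r 0
          = if p r = q 0 then (1:ℝ) else 0 := rfl
      rw [hsub, hM, IH (fun s => p (Equiv.swap 0 r s.succ)) (fun t => q t.succ)]
      ring
    rw [step1, step3, Nat.factorial_succ]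
    push_cast
    ring

section Analytic

variable {m n : ℕ}
  {L : ((Fin n → ℝ) × ((Fin m → ℝ) →L[ℝ] (Fin n → ℝ))) → ℝ}

/-- Decomposition of the vertical vector `(0, u ∘ E_{ij})` over the basic fibre directions. -/
theorem dir_decomp (u : (Fin m → ℝ) →L[ℝ] (Fin n → ℝ)) (i j : Fin m) :
    ((0 : Fin n → ℝ), u.comp (eu m i j)) =
      ∑ a : Fin n, u (Pi.single i 1) a • ((0 : Fin n → ℝ), fibreDir m n j a) := by
  rw [Prod.ext_iff]
  constructor
  · rw [Prod.fst_sum]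
    simp
  · rw [Prod.snd_sum]
    simp only [Prod.smul_snd]
    ext v b
    simp only [ContinuousLinearMap.coe_comp', Function.comp_apply, eu_apply,
      ContinuousLinearMap.sum_apply, ContinuousLinearMap.coe_smul', Pi.smul_apply,
      fibreDir_apply, Finset.sum_apply, map_smul, smul_eq_mul, Pi.single_apply, mul_ite,
      mul_one, mul_zero]
    rw [Finset.sum_congr rfl (fun a _ => by
      rw [show (if b = a then u (Pi.single i 1) a * v j else 0)
          = if a = b then v j * u (Pi.single i 1) a else 0 by
        rcases eq_or_ne a b with rfl | hab
        · simp [mul_comm]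
        · simp [hab, Ne.symm hab]])]
    rw [Finset.sum_ite_eq' Finset.univ b (fun a => v j * u (Pi.single i 1) a)]
    simp

/-- Decomposition of `(0, u ∘ B)` over the matrix units. -/
theorem dir_decompB (u : (Fin m → ℝ) →L[ℝ] (Fin n → ℝ))
    (B : (Fin m → ℝ) →L[ℝ] (Fin m → ℝ)) :
    ((0 : Fin n → ℝ), u.comp B) =
      ∑ j : Fin m, ∑ i : Fin m,
        (B (Pi.single j 1) i) • ((0 : Fin n → ℝ), u.comp (eu m i j)) := by
  rw [Prod.ext_iff]
  constructor
  · simp [Prod.fst_sum]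
  · simp only [Prod.snd_sum, Prod.smul_snd]
    ext v b
    simp only [ContinuousLinearMap.coe_comp', Function.comp_apply,
      ContinuousLinearMap.sum_apply, ContinuousLinearMap.coe_smul', Pi.smul_apply,
      eu_apply, map_smul, smul_eq_mul, Finset.sum_apply]
    have hv : B v = ∑ j : Fin m, v j • B (Pi.single j 1) := by
      conv_lhs => rw [show v = ∑ j : Fin m, v j • (Pi.single j 1 : Fin m → ℝ) by
        rw [Finset.sum_congr rfl (fun j _ => by
          rw [show v j • (Pi.single j 1 : Fin m → ℝ) = Pi.single j (v j) by
            rw [← Pi.single_smul, smul_eq_mul, mul_one]])]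
        rw [Finset.univ_sum_single]]
      rw [map_sum]
      simp
    rw [hv, map_sum, Finset.sum_apply]
    refine Finset.sum_congr rfl fun j _ => ?_
    rw [map_smul]
    have hBj : u (B (Pi.single j 1)) = ∑ i : Fin m, B (Pi.single j 1) i • u (Pi.single i 1) := by
      conv_lhs => rw [show B (Pi.single j 1) = ∑ i : Fin m,
          B (Pi.single j 1) i • (Pi.single i 1 : Fin m → ℝ) by
        rw [Finset.sum_congr rfl (fun i _ => by
          rw [show B (Pi.single j 1) i • (Pi.single i 1 : Fin m → ℝ)
              = Pi.single i (B (Pi.single j 1) i) by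
            rw [← Pi.single_smul, smul_eq_mul, mul_one]])]
        rw [Finset.univ_sum_single]]
      rw [map_sum]
      simp
    simp only [Pi.smul_apply, smul_eq_mul, hBj, Finset.sum_apply]
    rw [Finset.mul_sum]
    refine Finset.sum_congr rfl fun i _ => ?_
    ring

/-- Generalized homogeneity: the Euler operator along an arbitrary endomorphism `B`. -/
theorem hom_gen (hL : ContDiff ℝ (⊤ : ℕ∞) L)
    (hhom : ∀ (x : Fin n → ℝ) (u : (Fin m → ℝ) →L[ℝ] (Fin n → ℝ)) (i j : Fin m),
      ∑ a, u (Pi.single i 1) a * fderiv ℝ L (x, u) (0, fibreDir m n j a) =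
        (if i = j then (1 : ℝ) else 0) * L (x, u))
    (x : Fin n → ℝ) (u : (Fin m → ℝ) →L[ℝ] (Fin n → ℝ))
    (B : (Fin m → ℝ) →L[ℝ] (Fin m → ℝ)) :
    fderiv ℝ L (x, u) ((0 : Fin n → ℝ), u.comp B) = tr m B * L (x, u) := by
  have heu : ∀ i j : Fin m, fderiv ℝ L (x, u) ((0 : Fin n → ℝ), u.comp (eu m i j))
      = (if i = j then (1:ℝ) else 0) * L (x, u) := by
    intro i j
    rw [dir_decomp u i j, map_sum]
    simp only [map_smul, smul_eq_mul]
    exact hhom x u i j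
  rw [dir_decompB u B, map_sum]
  simp only [map_sum, map_smul, smul_eq_mul]
  have h1 : ∀ j : Fin m, (∑ i : Fin m,
      B (Pi.single j 1) i * fderiv ℝ L (x, u) ((0 : Fin n → ℝ), u.comp (eu m i j)))
      = B (Pi.single j 1) j * L (x, u) := by
    intro j
    rw [Finset.sum_congr rfl (fun i _ => by
      rw [heu i j, show B (Pi.single j 1) i * ((if i = j then (1:ℝ) else 0) * L (x, u))
          = if i = j then B (Pi.single j 1) i * L (x, u) else 0 from by
        rcases eq_or_ne i j with rfl | hij
        · simp
        · simp [hij]])]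
    rw [Finset.sum_ite_eq' Finset.univ j (fun i => B (Pi.single j 1) i * L (x, u))]
    simp
  rw [Finset.sum_congr rfl (fun j _ => h1 j), tr, Finset.sum_mul]

/-- Main analytic lemma: the iterated Euler identity with coefficients `cc`. -/
theorem lemA (hL : ContDiff ℝ (⊤ : ℕ∞) L)
    (hhom : ∀ (x : Fin n → ℝ) (u : (Fin m → ℝ) →L[ℝ] (Fin n → ℝ)) (i j : Fin m),
      ∑ a, u (Pi.single i 1) a * fderiv ℝ L (x, u) (0, fibreDir m n j a) =
        (if i = j then (1 : ℝ) else 0) * L (x, u))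
    (x : Fin n → ℝ) :
    ∀ (k : ℕ) (A : Fin k → ((Fin m → ℝ) →L[ℝ] (Fin m → ℝ)))
      (u : (Fin m → ℝ) →L[ℝ] (Fin n → ℝ)),
      iteratedFDeriv ℝ k L (x, u) (fun t => ((0 : Fin n → ℝ), u.comp (A t)))
        = cc m k A * L (x, u) := by
  intro k
  induction k with
  | zero =>
    intro A u
    rw [iteratedFDeriv_zero_apply, cc, one_mul]
  | succ k IH =>
    intro A u
    have hmk : HasFDerivAt (fun y : (Fin m → ℝ) →L[ℝ] (Fin n → ℝ) => (x, y))
        (ContinuousLinearMap.inr ℝ (Fin n → ℝ) ((Fin m → ℝ) →L[ℝ] (Fin n → ℝ))) u :=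
      hasFDerivAt_prodMk_right x u
    have hPhid : Differentiable ℝ (iteratedFDeriv ℝ k L) := by
      have h := hL.iteratedFDeriv_right (i := k) (m := ((⊤ : ℕ∞) : WithTop ℕ∞))
        (by exact_mod_cast le_top)
      exact h.differentiable (by simp)
    have ha : HasFDerivAt (fun y => iteratedFDeriv ℝ k L (x, y))
        ((fderiv ℝ (iteratedFDeriv ℝ k L) (x, u)).comp
          (ContinuousLinearMap.inr ℝ (Fin n → ℝ) ((Fin m → ℝ) →L[ℝ] (Fin n → ℝ)))) u :=
      HasFDerivAt.comp (g := iteratedFDeriv ℝ k L) (f := fun y => (x, y)) u (hPhid (x, u)).hasFDerivAt hmk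
    set J : Fin k → (((Fin m → ℝ) →L[ℝ] (Fin n → ℝ)) →L[ℝ]
        ((Fin n → ℝ) × ((Fin m → ℝ) →L[ℝ] (Fin n → ℝ)))) :=
      fun t => (ContinuousLinearMap.inr ℝ (Fin n → ℝ) ((Fin m → ℝ) →L[ℝ] (Fin n → ℝ))).comp
        ((ContinuousLinearMap.compL ℝ (Fin m → ℝ) (Fin m → ℝ) (Fin n → ℝ)).flip (Fin.tail A t))
      with hJdef
    have hJap : ∀ (t : Fin k) (w : (Fin m → ℝ) →L[ℝ] (Fin n → ℝ)),
        J t w = ((0 : Fin n → ℝ), w.comp (Fin.tail A t)) := fun t w => rfl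
    have hb : ∀ t : Fin k, HasFDerivAt
        (fun y : (Fin m → ℝ) →L[ℝ] (Fin n → ℝ) =>
          (((0 : Fin n → ℝ), y.comp (Fin.tail A t)) :
            (Fin n → ℝ) × ((Fin m → ℝ) →L[ℝ] (Fin n → ℝ)))) (J t) u := fun t =>
      (J t).hasFDerivAt
    have hG := HasFDerivAt.linear_multilinear_comp (a := fun y => iteratedFDeriv ℝ k L (x, y)) ha hb
      (ContinuousLinearMap.id ℝ (ContinuousMultilinearMap ℝ
        (fun _ : Fin k => (Fin n → ℝ) × ((Fin m → ℝ) →L[ℝ] (Fin n → ℝ))) ℝ))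
    have hLd : HasFDerivAt (fun y => L (x, y))
        ((fderiv ℝ L (x, u)).comp
          (ContinuousLinearMap.inr ℝ (Fin n → ℝ) ((Fin m → ℝ) →L[ℝ] (Fin n → ℝ)))) u :=
      ((hL.differentiable (by simp) (x, u)).hasFDerivAt).comp u hmk
    have hfe : (fun y => (ContinuousLinearMap.id ℝ (ContinuousMultilinearMap ℝ
          (fun _ : Fin k => (Fin n → ℝ) × ((Fin m → ℝ) →L[ℝ] (Fin n → ℝ))) ℝ))
          (iteratedFDeriv ℝ k L (x, y))
          (fun t => (((0 : Fin n → ℝ), y.comp (Fin.tail A t)) :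
            (Fin n → ℝ) × ((Fin m → ℝ) →L[ℝ] (Fin n → ℝ)))))
        = fun y => cc m k (Fin.tail A) * L (x, y) :=
      funext fun y => IH (Fin.tail A) y
    have hR : HasFDerivAt (fun y => (ContinuousLinearMap.id ℝ (ContinuousMultilinearMap ℝ
          (fun _ : Fin k => (Fin n → ℝ) × ((Fin m → ℝ) →L[ℝ] (Fin n → ℝ))) ℝ))
          (iteratedFDeriv ℝ k L (x, y))
          (fun t => (((0 : Fin n → ℝ), y.comp (Fin.tail A t)) :
            (Fin n → ℝ) × ((Fin m → ℝ) →L[ℝ] (Fin n → ℝ)))))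
        (cc m k (Fin.tail A) • ((fderiv ℝ L (x, u)).comp
          (ContinuousLinearMap.inr ℝ (Fin n → ℝ) ((Fin m → ℝ) →L[ℝ] (Fin n → ℝ))))) u := by
      rw [hfe]
      exact hLd.const_mul (cc m k (Fin.tail A))
    have hDeq := hG.unique hR
    have hEval := DFunLike.congr_fun hDeq (u.comp (A 0))
    simp only [ContinuousLinearMap.add_apply, ContinuousLinearMap.coe_comp',
      Function.comp_apply, ContinuousLinearMap.sum_apply,
      ContinuousLinearMap.flipMultilinear_apply_apply, ContinuousLinearMap.id_apply,
      ContinuousLinearMap.inr_apply, ContinuousLinearMap.smul_apply, smul_eq_mul,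
      ContinuousMultilinearMap.toContinuousLinearMap_apply] at hEval
    rw [hom_gen hL hhom x u (A 0)] at hEval
    have hupdate : ∀ t : Fin k,
        (Function.update (fun s : Fin k => (((0 : Fin n → ℝ), u.comp (Fin.tail A s)) :
            (Fin n → ℝ) × ((Fin m → ℝ) →L[ℝ] (Fin n → ℝ)))) t (J t (u.comp (A 0))))
        = fun s : Fin k => (((0 : Fin n → ℝ),
            u.comp (Function.update (Fin.tail A) t ((A 0).comp (Fin.tail A t)) s)) :
            (Fin n → ℝ) × ((Fin m → ℝ) →L[ℝ] (Fin n → ℝ))) := by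
      intro t
      funext s
      rcases eq_or_ne s t with rfl | hst
      · rw [Function.update_self, Function.update_self, hJap]
        rw [ContinuousLinearMap.comp_assoc]
      · rw [Function.update_of_ne hst, Function.update_of_ne hst]
    rw [Finset.sum_congr rfl (fun t (_ : t ∈ Finset.univ) => by
      rw [hupdate t, IH (Function.update (Fin.tail A) t ((A 0).comp (Fin.tail A t))) u])] at hEval
    have hcons : (fun t : Fin (k+1) => (((0 : Fin n → ℝ), u.comp (A t)) :
        (Fin n → ℝ) × ((Fin m → ℝ) →L[ℝ] (Fin n → ℝ))))
        = Fin.cons ((0 : Fin n → ℝ), u.comp (A 0))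
          (fun s : Fin k => ((0 : Fin n → ℝ), u.comp (Fin.tail A s))) := by
      funext t
      induction t using Fin.cases with
      | zero => rw [Fin.cons_zero]
      | succ s => rw [Fin.cons_succ]; rfl
    rw [hcons, iteratedFDeriv_succ_apply_left, Fin.cons_zero, Fin.tail_cons]
    rw [cc, sub_mul, Finset.sum_mul]
    linear_combination hEval

end Analytic

end FEI

/-- Iterated Euler identity for a homogeneous Lagrangian: if
the smooth `L` on `T_mℝ^n ≅ ℝ^n × (ℝ^m →L[ℝ] ℝ^n)` satisfies the infinitesimal
homogeneity condition `Σ_a u_i^a ∂L/∂u_j^a = δ_i^j L`, then for all `(x, u)`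
`Σ_{a₁,…,a_m} (∂^m L / ∂u_1^{a₁} ⋯ ∂u_m^{a_m})(x,u) · det(u_j^{a_i}) = m! L(x,u)`,
where `u_i^a` is the `a`-th component of `u e_i`, the mixed `m`-th partial
derivative is taken in the fibre coordinates `u_1^{a₁}, …, u_m^{a_m}` and the
determinant is of the `m × m` matrix whose `(i,j)` entry is `u_j^{a_i}`. -/
theorem fundamental_equivalent_identity (m n : ℕ)
    (L : ((Fin n → ℝ) × ((Fin m → ℝ) →L[ℝ] (Fin n → ℝ))) → ℝ)
    (hL : ContDiff ℝ (⊤ : ℕ∞) L)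
    (hhom : ∀ (x : Fin n → ℝ) (u : (Fin m → ℝ) →L[ℝ] (Fin n → ℝ)) (i j : Fin m),
      ∑ a, u (Pi.single i 1) a * fderiv ℝ L (x, u) (0, fibreDir m n j a) =
        (if i = j then (1 : ℝ) else 0) * L (x, u)) :
    ∀ (x : Fin n → ℝ) (u : (Fin m → ℝ) →L[ℝ] (Fin n → ℝ)),
      ∑ a : Fin m → Fin n,
        (iteratedFDeriv ℝ m L (x, u)
            (fun j => ((0 : Fin n → ℝ), fibreDir m n j (a j)))) *
          Matrix.det (Matrix.of fun i j => u (Pi.single j 1) (a i)) =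
        (m.factorial : ℝ) * L (x, u) := by
  intro x u
  classical
  have hdet : ∀ a : Fin m → Fin n, (Matrix.of fun i j => u (Pi.single j 1) (a i)).det
      = ∑ σ : Equiv.Perm (Fin m), ((Equiv.Perm.sign σ : ℤ) : ℝ) *
          ∏ i, u (Pi.single i 1) (a (σ i)) := by
    intro a
    rw [Matrix.det_apply']
    rfl
  rw [Finset.sum_congr rfl (fun a _ => by rw [hdet a, Finset.mul_sum])]
  rw [Finset.sum_comm]
  have key : ∀ σ : Equiv.Perm (Fin m), ∑ a : Fin m → Fin n,
      (iteratedFDeriv ℝ m L (x, u) (fun j => ((0 : Fin n → ℝ), fibreDir m n j (a j)))) *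
        (((Equiv.Perm.sign σ : ℤ) : ℝ) * ∏ i, u (Pi.single i 1) (a (σ i)))
      = ((Equiv.Perm.sign σ : ℤ) : ℝ) *
          (FEI.cc m m (fun j => FEI.eu m (σ⁻¹ j) j) * L (x, u)) := by
    intro σ
    have hprod : ∀ a : Fin m → Fin n, (∏ i, u (Pi.single i 1) (a (σ i)))
        = ∏ j, u (Pi.single (σ⁻¹ j) 1) (a j) := by
      intro a
      exact Fintype.prod_equiv σ (fun i => u (Pi.single i 1) (a (σ i)))
        (fun j => u (Pi.single (σ⁻¹ j) 1) (a j)) (fun i => by simp)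
    have hms : ∑ a : Fin m → Fin n,
        (iteratedFDeriv ℝ m L (x, u) (fun j => ((0 : Fin n → ℝ), fibreDir m n j (a j)))) *
          (∏ j, u (Pi.single (σ⁻¹ j) 1) (a j))
        = iteratedFDeriv ℝ m L (x, u)
            (fun j => ((0 : Fin n → ℝ), u.comp (FEI.eu m (σ⁻¹ j) j))) := by
      have hsum := (iteratedFDeriv ℝ m L (x, u)).toMultilinearMap.map_sum
        (fun (j : Fin m) (α : Fin n) =>
          u (Pi.single (σ⁻¹ j) 1) α • (((0 : Fin n → ℝ), fibreDir m n j α) :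
            (Fin n → ℝ) × ((Fin m → ℝ) →L[ℝ] (Fin n → ℝ))))
      have hleft : (fun j : Fin m => ∑ α : Fin n,
          u (Pi.single (σ⁻¹ j) 1) α • (((0 : Fin n → ℝ), fibreDir m n j α) :
            (Fin n → ℝ) × ((Fin m → ℝ) →L[ℝ] (Fin n → ℝ))))
          = fun j : Fin m => (((0 : Fin n → ℝ), u.comp (FEI.eu m (σ⁻¹ j) j)) :
            (Fin n → ℝ) × ((Fin m → ℝ) →L[ℝ] (Fin n → ℝ))) := by
        funext j
        rw [← FEI.dir_decomp u (σ⁻¹ j) j]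
      rw [hleft] at hsum
      rw [show (iteratedFDeriv ℝ m L (x, u)) (fun j => (((0 : Fin n → ℝ),
          u.comp (FEI.eu m (σ⁻¹ j) j)))) = (iteratedFDeriv ℝ m L (x, u)).toMultilinearMap
          (fun j => (((0 : Fin n → ℝ), u.comp (FEI.eu m (σ⁻¹ j) j)))) from rfl, hsum]
      refine Finset.sum_congr rfl fun a _ => ?_
      rw [show ((iteratedFDeriv ℝ m L (x, u)).toMultilinearMap
          (fun j => u (Pi.single (σ⁻¹ j) 1) (a j) •
            (((0 : Fin n → ℝ), fibreDir m n j (a j)) :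
              (Fin n → ℝ) × ((Fin m → ℝ) →L[ℝ] (Fin n → ℝ)))))
          = (∏ j, u (Pi.single (σ⁻¹ j) 1) (a j)) •
            (iteratedFDeriv ℝ m L (x, u)).toMultilinearMap
              (fun j => (((0 : Fin n → ℝ), fibreDir m n j (a j)) :
                (Fin n → ℝ) × ((Fin m → ℝ) →L[ℝ] (Fin n → ℝ)))) from
        (iteratedFDeriv ℝ m L (x, u)).toMultilinearMap.map_smul_univ
          (fun j => u (Pi.single (σ⁻¹ j) 1) (a j)) _]
      rw [smul_eq_mul]
      exact mul_comm _ _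
    calc ∑ a : Fin m → Fin n,
        (iteratedFDeriv ℝ m L (x, u) (fun j => ((0 : Fin n → ℝ), fibreDir m n j (a j)))) *
          (((Equiv.Perm.sign σ : ℤ) : ℝ) * ∏ i, u (Pi.single i 1) (a (σ i)))
        = ((Equiv.Perm.sign σ : ℤ) : ℝ) * ∑ a : Fin m → Fin n,
            (iteratedFDeriv ℝ m L (x, u) (fun j => ((0 : Fin n → ℝ), fibreDir m n j (a j)))) *
              (∏ j, u (Pi.single (σ⁻¹ j) 1) (a j)) := by
          rw [Finset.mul_sum]
          refine Finset.sum_congr rfl fun a _ => ?_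
          rw [hprod a]
          ring
      _ = ((Equiv.Perm.sign σ : ℤ) : ℝ) *
            (FEI.cc m m (fun j => FEI.eu m (σ⁻¹ j) j) * L (x, u)) := by
          rw [hms, FEI.lemA hL hhom x m (fun j => FEI.eu m (σ⁻¹ j) j) u]
  rw [Finset.sum_congr rfl (fun σ _ => key σ)]
  have hreindex : ∑ σ : Equiv.Perm (Fin m), ((Equiv.Perm.sign σ : ℤ) : ℝ) *
      (FEI.cc m m (fun j => FEI.eu m (σ⁻¹ j) j) * L (x, u))
      = ∑ σ : Equiv.Perm (Fin m), ((Equiv.Perm.sign σ : ℤ) : ℝ) *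
        (FEI.cc m m (fun j => FEI.eu m (σ j) j) * L (x, u)) := by
    rw [← Equiv.sum_comp (Equiv.inv (Equiv.Perm (Fin m)))
      (fun σ : Equiv.Perm (Fin m) => ((Equiv.Perm.sign σ : ℤ) : ℝ) *
        (FEI.cc m m (fun j => FEI.eu m (σ⁻¹ j) j) * L (x, u)))]
    refine Finset.sum_congr rfl fun σ _ => ?_
    simp [Equiv.inv_apply, Equiv.Perm.sign_inv]
  rw [hreindex]
  have hcomb := FEI.comb m m (fun i => i) (fun i => i)
  have hdet1 : (Matrix.of fun s t : Fin m => if (fun i => i) s = (fun i => i) t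
      then (1:ℝ) else 0).det = 1 := by
    rw [show (Matrix.of fun s t : Fin m => if (fun i => i) s = (fun i => i) t
        then (1:ℝ) else 0) = (1 : Matrix (Fin m) (Fin m) ℝ) from by
      ext s t
      rw [Matrix.one_apply]
      rfl]
    exact Matrix.det_one
  rw [hdet1, mul_one] at hcomb
  calc ∑ σ : Equiv.Perm (Fin m), ((Equiv.Perm.sign σ : ℤ) : ℝ) *
        (FEI.cc m m (fun j => FEI.eu m (σ j) j) * L (x, u))
      = (∑ σ : Equiv.Perm (Fin m), ((Equiv.Perm.sign σ : ℤ) : ℝ) *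
          FEI.cc m m (fun j => FEI.eu m (σ j) j)) * L (x, u) := by
        rw [Finset.sum_mul]
        refine Finset.sum_congr rfl fun σ _ => ?_
        ring
    _ = (m.factorial : ℝ) * L (x, u) := by rw [hcomb]
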